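/- arXiv:1101.4316 — 4 statements merged into one kernel-verified Lean document; each statement's English description precedes it below -/
import Mathlib

section
/- If Y is a random variable in a separable Hilbert space satisfying the Gaussian-type small ball bound P(‖Y − m‖ ≤ ε) ≤ C₁ ε^{C₄} exp(−C₂ ε^{−C₃}) for all ε ∈ (0,1], with C₁, C₂, C₃ > 0, then E[‖Y − m‖^{-β}] < ∞ for every β > 0. -/
open MeasureTheory Real Filter

private lemma pow_rpow_aux {x : ℝ} (hx : 0 < x) (n : ℕ) (c : ℝ) :
    (x ^ n) ^ c = (x ^ c) ^ n := by
  rw [← Real.rpow_natCast x n, ← Real.rpow_mul hx.le, mul_comm,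
    Real.rpow_mul hx.le, Real.rpow_natCast]

private lemma aux_summable {ρ c t : ℝ} (hρ : 0 < ρ) (hc : 0 < c) (ht : 1 < t) :
    Summable (fun n : ℕ => ρ ^ n * Real.exp (-c * t ^ n)) := by
  apply summable_of_ratio_norm_eventually_le (r := 1/2) (by norm_num)
  have htpow : Tendsto (fun n : ℕ => t ^ n) atTop atTop :=
    tendsto_pow_atTop_atTop_of_one_lt ht
  have hlin : Tendsto (fun x : ℝ => -(c * (t - 1)) * x) atTop atBot := by
    have h1 : Tendsto (fun x : ℝ => (c * (t - 1)) * x) atTop atTop :=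
      (tendsto_id.const_mul_atTop (by nlinarith))
    simp only [neg_mul]
    exact tendsto_neg_atTop_atBot.comp h1
  have hexp : Tendsto (fun x : ℝ => ρ * Real.exp (-(c * (t - 1)) * x)) atTop (nhds 0) := by
    have := (Real.tendsto_exp_atBot.comp hlin).const_mul ρ
    simpa using this
  have hev : ∀ᶠ n : ℕ in atTop, ρ * Real.exp (-(c * (t - 1)) * t ^ n) ≤ 1 / 2 :=
    ((hexp.comp htpow).eventually_lt_const (by norm_num : (0:ℝ) < 1/2)).mono
      fun n hn => hn.le
  filter_upwards [hev] with n hn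
  have hsplit : -c * t ^ (n + 1) = (-(c * (t - 1)) * t ^ n) + (-c * t ^ n) := by
    rw [pow_succ]; ring
  have hnn : (0:ℝ) ≤ ρ ^ n * Real.exp (-c * t ^ n) := by positivity
  rw [Real.norm_eq_abs, Real.norm_eq_abs, abs_of_nonneg (by positivity),
    abs_of_nonneg hnn, hsplit, Real.exp_add]
  calc ρ ^ (n + 1) * (Real.exp (-(c * (t - 1)) * t ^ n) * Real.exp (-c * t ^ n))
      = (ρ * Real.exp (-(c * (t - 1)) * t ^ n)) * (ρ ^ n * Real.exp (-c * t ^ n)) := by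
        rw [pow_succ]; ring
    _ ≤ (1 / 2) * (ρ ^ n * Real.exp (-c * t ^ n)) :=
        mul_le_mul_of_nonneg_right hn hnn

/-- Under a Gaussian-type small ball bound
`P(‖Y - m‖ ≤ ε) ≤ C₁ ε^{C₄} exp(-C₂ ε^{-C₃})`, all negative moments
`E[‖Y - m‖^{-β}]`, `β > 0`, are finite. -/
theorem stmt_2
    {H : Type*} [NormedAddCommGroup H] [InnerProductSpace ℝ H]
    [CompleteSpace H] [SecondCountableTopology H] [MeasurableSpace H] [BorelSpace H]
    {Ω : Type*} [MeasurableSpace Ω] (μ : Measure Ω) [IsProbabilityMeasure μ]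
    (Y : Ω → H) (hY : Measurable Y) (m : H)
    (hne : ∀ᵐ ω ∂μ, Y ω ≠ m)
    (C₁ C₂ C₃ C₄ : ℝ) (hC₁ : 0 < C₁) (hC₂ : 0 < C₂) (hC₃ : 0 < C₃)
    (hball : ∀ ε ∈ Set.Ioc (0 : ℝ) 1,
      μ {ω | ‖Y ω - m‖ ≤ ε} ≤ ENNReal.ofReal (C₁ * ε ^ C₄ * Real.exp (-C₂ * ε ^ (-C₃))))
    (β : ℝ) (hβ : 0 < β) :
    ∫⁻ ω, ENNReal.ofReal (‖Y ω - m‖ ^ (-β)) ∂μ < ⊤ := by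
  -- notation
  set r : ℕ → ℝ := fun n => (1/2 : ℝ) ^ n with hr
  have hrpos : ∀ n, 0 < r n := fun n => by positivity
  have hrle1 : ∀ n, r n ≤ 1 := fun n => pow_le_one₀ (by norm_num) (by norm_num)
  set f : Ω → ENNReal := fun ω => ENNReal.ofReal (‖Y ω - m‖ ^ (-β)) with hf
  set U : Set Ω := {ω | 1 < ‖Y ω - m‖} with hU
  set A : ℕ → Set Ω := fun n => {ω | ‖Y ω - m‖ ∈ Set.Ioc (r (n + 1)) (r n)} with hA
  have hX : Measurable fun ω => ‖Y ω - m‖ := (hY.sub measurable_const).norm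
  have hUm : MeasurableSet U := hX measurableSet_Ioi
  have hAm : ∀ n, MeasurableSet (A n) := fun n => hX measurableSet_Ioc
  set S : Set Ω := U ∪ ⋃ n, A n with hS
  have hSm : MeasurableSet S := hUm.union (MeasurableSet.iUnion hAm)
  -- coverage
  have hcov : ∀ ω, 0 < ‖Y ω - m‖ → ω ∈ S := by
    intro ω hx
    by_cases h1 : 1 < ‖Y ω - m‖
    · exact Or.inl h1
    · have hle : ‖Y ω - m‖ ≤ 1 := not_lt.1 h1
      have hex : ∃ n : ℕ, (1/2 : ℝ) ^ n < ‖Y ω - m‖ :=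
        exists_pow_lt_of_lt_one hx (by norm_num)
      have hN0 : Nat.find hex ≠ 0 := by
        intro h0
        have := Nat.find_spec hex
        rw [h0] at this
        simp at this
        exact absurd this (not_lt.2 hle)
      obtain ⟨k, hk⟩ := Nat.exists_eq_succ_of_ne_zero hN0
      refine Or.inr (Set.mem_iUnion.2 ⟨k, ?_, ?_⟩)
      · have := Nat.find_spec hex
        rw [hk] at this
        exact this
      · exact not_lt.1 (Nat.find_min hex (by omega))
  -- complement is null
  have hnull : μ Sᶜ = 0 := by
    have hae : ∀ᵐ ω ∂μ, ω ∈ S := by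
      filter_upwards [hne] with ω hω
      exact hcov ω (by rwa [norm_pos_iff, sub_ne_zero])
    simpa [ae_iff, Set.compl_def] using hae
  -- the summable bounding sequence
  set a : ℕ → ℝ := fun n =>
    (r (n + 1)) ^ (-β) * (C₁ * (r n) ^ C₄ * Real.exp (-C₂ * (r n) ^ (-C₃))) with ha
  have ha_nonneg : ∀ n, 0 ≤ a n := by
    intro n
    have h1 : (0:ℝ) < (r (n+1)) ^ (-β) := Real.rpow_pos_of_pos (hrpos _) _
    have h2 : (0:ℝ) < (r n) ^ C₄ := Real.rpow_pos_of_pos (hrpos _) _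
    positivity
  -- summability
  set ρβ : ℝ := (1/2 : ℝ) ^ (-β) with hρβ
  set c4 : ℝ := (1/2 : ℝ) ^ (C₄) with hc4
  set t : ℝ := (1/2 : ℝ) ^ (-C₃) with htd
  have hρβpos : 0 < ρβ := Real.rpow_pos_of_pos (by norm_num) _
  have hc4pos : 0 < c4 := Real.rpow_pos_of_pos (by norm_num) _
  have ht1 : 1 < t := by
    rw [htd, Real.one_lt_rpow_iff_of_pos (by norm_num)]
    right
    constructor <;> [norm_num; linarith]
  have ha_eq : ∀ n, a n = (ρβ * C₁) * ((ρβ * c4) ^ n * Real.exp (-C₂ * t ^ n)) := by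
    intro n
    have e1 : (r (n + 1)) ^ (-β) = ρβ ^ (n + 1) := pow_rpow_aux (by norm_num) (n+1) (-β)
    have e2 : (r n) ^ (C₄) = c4 ^ n := pow_rpow_aux (by norm_num) n C₄
    have e3 : (r n) ^ (-C₃) = t ^ n := pow_rpow_aux (by norm_num) n (-C₃)
    rw [ha]
    simp only [e1, e2, e3]
    rw [pow_succ, mul_pow]
    ring
  have hsummable : Summable a := by
    have := (aux_summable (mul_pos hρβpos hc4pos) hC₂ ht1).mul_left (ρβ * C₁)
    exact this.congr fun n => (ha_eq n).symm
  -- bound on each annulus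
  have hA_bound : ∀ n, ∫⁻ ω in A n, f ω ∂μ ≤ ENNReal.ofReal (a n) := by
    intro n
    have hstep1 : ∫⁻ ω in A n, f ω ∂μ ≤ ENNReal.ofReal ((r (n+1)) ^ (-β)) * μ (A n) := by
      have hmono : ∀ ω ∈ A n, f ω ≤ ENNReal.ofReal ((r (n+1)) ^ (-β)) := by
        intro ω hω
        exact ENNReal.ofReal_le_ofReal
          (Real.rpow_le_rpow_of_nonpos (hrpos (n+1)) hω.1.le (neg_nonpos.2 hβ.le))
      calc ∫⁻ ω in A n, f ω ∂μ
          ≤ ∫⁻ _ω in A n, ENNReal.ofReal ((r (n+1)) ^ (-β)) ∂μ :=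
            setLIntegral_mono' (hAm n) hmono
        _ = ENNReal.ofReal ((r (n+1)) ^ (-β)) * μ (A n) := setLIntegral_const _ _
    have hstep2 : μ (A n) ≤ ENNReal.ofReal (C₁ * (r n) ^ C₄ * Real.exp (-C₂ * (r n) ^ (-C₃))) := by
      refine le_trans (measure_mono ?_) (hball (r n) ⟨hrpos n, hrle1 n⟩)
      intro ω hω
      exact hω.2
    calc ∫⁻ ω in A n, f ω ∂μ
        ≤ ENNReal.ofReal ((r (n+1)) ^ (-β)) *
            ENNReal.ofReal (C₁ * (r n) ^ C₄ * Real.exp (-C₂ * (r n) ^ (-C₃))) :=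
          le_trans hstep1 (mul_le_mul_right hstep2 _)
      _ = ENNReal.ofReal (a n) := by
          rw [← ENNReal.ofReal_mul (Real.rpow_pos_of_pos (hrpos (n+1)) _).le]
  -- bound on U
  have hU_bound : ∫⁻ ω in U, f ω ∂μ ≤ 1 := by
    have hmono : ∀ ω ∈ U, f ω ≤ 1 := by
      intro ω hω
      have : ‖Y ω - m‖ ^ (-β) ≤ 1 :=
        Real.rpow_le_one_of_one_le_of_nonpos (le_of_lt hω) (neg_nonpos.2 hβ.le)
      calc f ω ≤ ENNReal.ofReal 1 := ENNReal.ofReal_le_ofReal this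
        _ = 1 := ENNReal.ofReal_one
    calc ∫⁻ ω in U, f ω ∂μ ≤ ∫⁻ _ω in U, 1 ∂μ := setLIntegral_mono' hUm hmono
      _ = 1 * μ U := setLIntegral_const _ _
      _ ≤ 1 * 1 := by
          exact mul_le_mul_right prob_le_one _
      _ = 1 := mul_one _
  -- put everything together
  have hmain : ∫⁻ ω, f ω ∂μ ≤ 1 + ∑' n, ENNReal.ofReal (a n) := by
    calc ∫⁻ ω, f ω ∂μ
        = ∫⁻ ω in S, f ω ∂μ + ∫⁻ ω in Sᶜ, f ω ∂μ := (lintegral_add_compl f hSm).symm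
      _ = ∫⁻ ω in S, f ω ∂μ := by
          rw [setLIntegral_measure_zero _ _ hnull, add_zero]
      _ ≤ ∫⁻ ω in U, f ω ∂μ + ∫⁻ ω in ⋃ n, A n, f ω ∂μ := lintegral_union_le _ _ _
      _ ≤ 1 + ∑' n, ∫⁻ ω in A n, f ω ∂μ :=
          add_le_add hU_bound (lintegral_iUnion_le _ _)
      _ ≤ 1 + ∑' n, ENNReal.ofReal (a n) :=
          add_le_add_right (ENNReal.tsum_le_tsum hA_bound) _
  have hfin : (1 : ENNReal) + ∑' n, ENNReal.ofReal (a n) < ⊤ := by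
    rw [← ENNReal.ofReal_tsum_of_nonneg ha_nonneg hsummable]
    exact ENNReal.add_lt_top.2 ⟨ENNReal.one_lt_top, ENNReal.ofReal_lt_top⟩
  exact lt_of_le_of_lt hmain hfin
end

section
/- Let (V_n) be a sequence of nonnegative integrable random variables adapted to a filtration (ℱ_n), and (γ_n) a sequence of nonnegative reals with Σ γ_n² < ∞, such that E[V_{n+1} | ℱ_n] ≤ V_n + γ_n². Then (V_n) converges almost surely to a finite random variable, and sup_n E[V_n] ≤ E[V_0] + Σ_{k≥1} γ_k². -/
open MeasureTheory Filter

/-- Robbins–Siegmund-type lemma: if `E[V_{n+1} | ℱ_n] ≤ V_n + γ_n²` with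
`Σ γ_n² < ∞`, then `V_n` converges a.s. and the expectations are uniformly
bounded by `E[V_0] + Σ γ_k²`. -/
theorem stmt_13
    {Ω : Type*} {m0 : MeasurableSpace Ω}
    (μ : Measure Ω) [IsProbabilityMeasure μ]
    (ℱ : Filtration ℕ m0)
    (V : ℕ → Ω → ℝ) (hadapted : Adapted ℱ V)
    (hpos : ∀ n, 0 ≤ᵐ[μ] V n)
    (hint : ∀ n, Integrable (V n) μ)
    (γ : ℕ → ℝ) (hγ : ∀ n, 0 ≤ γ n)
    (hγ2 : Summable (fun n => γ n ^ 2))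
    (hcond : ∀ n, μ[V (n + 1) | ℱ n] ≤ᵐ[μ] fun ω => V n ω + γ n ^ 2) :
    (∃ Vlim : Ω → ℝ, ∀ᵐ ω ∂μ, Tendsto (fun n => V n ω) atTop (nhds (Vlim ω))) ∧
    (∀ n, ∫ ω, V n ω ∂μ ≤ (∫ ω, V 0 ω ∂μ) + ∑' k, γ k ^ 2) := by
  classical
  -- tail sums
  set t : ℕ → ℝ := fun n => ∑' k, γ (k + n) ^ 2 with ht_def
  have ht_sum : ∀ n, Summable (fun k => γ (k + n) ^ 2) := fun n =>
    (summable_nat_add_iff n).2 hγ2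
  have ht_nonneg : ∀ n, 0 ≤ t n := fun n =>
    tsum_nonneg fun k => sq_nonneg _
  have ht_rec : ∀ n, t n = γ n ^ 2 + t (n + 1) := by
    intro n
    have h0 := (ht_sum n).tsum_eq_zero_add
    have : (fun k => γ (k + 1 + n) ^ 2) = fun k => γ (k + (n + 1)) ^ 2 := by
      funext k
      have hk : k + 1 + n = k + (n + 1) := by omega
      rw [hk]
    simpa [ht_def, this] using h0
  have ht_tendsto : Tendsto t atTop (nhds 0) := tendsto_sum_nat_add fun k => γ k ^ 2
  -- the supermartingale U n = V n + t n
  set U : ℕ → Ω → ℝ := fun n ω => V n ω + t n with hU_def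
  have hU_adapted : Adapted ℱ U := fun n => (hadapted n).add measurable_const
  have hU_int : ∀ n, Integrable (U n) μ := fun n => (hint n).add (integrable_const _)
  have hU_super : Supermartingale U ℱ μ := by
    refine supermartingale_nat (fun n => (hU_adapted n).stronglyMeasurable) hU_int fun n => ?_
    have h1 : μ[U (n + 1) | ℱ n] =ᵐ[μ]
        fun ω => (μ[V (n + 1) | ℱ n]) ω + t (n + 1) := by
      have := condExp_add (μ := μ) (hint (n + 1))
        (integrable_const (t (n + 1))) (ℱ n)
      refine this.trans ?_
      have hc := condExp_const (m := ℱ n) (ℱ.le n) (t (n + 1)) (μ := μ)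
      filter_upwards with ω
      simp [hc]
    filter_upwards [h1, hcond n] with ω hω1 hω2
    rw [hU_def]
    calc (μ[U (n + 1) | ℱ n]) ω = (μ[V (n + 1) | ℱ n]) ω + t (n + 1) := hω1
      _ ≤ V n ω + γ n ^ 2 + t (n + 1) := by linarith
      _ = V n ω + t n := by rw [ht_rec n]; ring
  have hU_pos : ∀ n, 0 ≤ᵐ[μ] U n := by
    intro n
    filter_upwards [hpos n] with ω hω
    exact add_nonneg hω (ht_nonneg n)
  -- expectation bounds
  have hint_U : ∀ n, ∫ ω, U n ω ∂μ = (∫ ω, V n ω ∂μ) + t n := by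
    intro n
    rw [hU_def]
    rw [integral_add (hint n) (integrable_const _), integral_const]
    simp
  have hEU_le : ∀ n, ∫ ω, U n ω ∂μ ≤ ∫ ω, U 0 ω ∂μ := by
    intro n
    have := hU_super.setIntegral_le (Nat.zero_le n) (MeasurableSet.univ (α := Ω))
    simpa [setIntegral_univ] using this
  -- L¹ boundedness
  have hL1 : ∀ n, eLpNorm (U n) 1 μ ≤ ENNReal.ofReal (∫ ω, U 0 ω ∂μ) := by
    intro n
    have h1 : eLpNorm (U n) 1 μ = ENNReal.ofReal (∫ ω, U n ω ∂μ) := by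
      rw [eLpNorm_one_eq_lintegral_enorm,
        ofReal_integral_eq_lintegral_ofReal (hU_int n) (hU_pos n)]
      refine lintegral_congr_ae ?_
      filter_upwards [hU_pos n] with ω hω
      simp [Real.enorm_eq_ofReal hω]
    rw [h1]
    exact ENNReal.ofReal_le_ofReal (hEU_le n)
  -- a.s. convergence of U, hence of V
  have hconv : ∀ᵐ ω ∂μ, ∃ c, Tendsto (fun n => U n ω) atTop (nhds c) := by
    have hsub : Submartingale (-U) ℱ μ := hU_super.neg
    have hbdd : ∀ n, eLpNorm ((-U) n) 1 μ ≤ (∫ ω, U 0 ω ∂μ).toNNReal := by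
      intro n
      have : eLpNorm ((-U) n) 1 μ = eLpNorm (U n) 1 μ := by
        simp [eLpNorm_neg]
      rw [this]
      refine (hL1 n).trans ?_
      rw [ENNReal.ofReal]
    have := hsub.exists_ae_tendsto_of_bdd hbdd
    filter_upwards [this] with ω ⟨c, hc⟩
    refine ⟨-c, ?_⟩
    have : Tendsto (fun n => -((-U) n ω)) atTop (nhds (-c)) := hc.neg
    simpa using this
  constructor
  · refine ⟨fun ω => limUnder atTop (fun n => V n ω), ?_⟩
    filter_upwards [hconv] with ω ⟨c, hc⟩
    have hV : Tendsto (fun n => V n ω) atTop (nhds (c - 0)) := by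
      have : Tendsto (fun n => U n ω - t n) atTop (nhds (c - 0)) :=
        hc.sub ht_tendsto
      simpa [hU_def] using this
    rwa [hV.limUnder_eq]
  · intro n
    have h1 : ∫ ω, V n ω ∂μ ≤ ∫ ω, U n ω ∂μ := by
      rw [hint_U n]; linarith [ht_nonneg n]
    have h2 : ∫ ω, U 0 ω ∂μ = (∫ ω, V 0 ω ∂μ) + ∑' k, γ k ^ 2 := by
      rw [hint_U 0]
      simp [ht_def]
    linarith [hEU_le n, h1, h2.le]
end

section
/- Let α ∈ (1/2, 1) and c > 0. Consider the sum S_n = Σ_{k=1}^{n-1} k^{-2α} exp(−c(n^{1−α} − k^{1−α})). Then there exists C > 0 such that S_n ≤ C ln(n) n^{-α} for all n ≥ 2. -/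
open Real Finset

lemma geom_partial_le {r : ℝ} (hr0 : 0 ≤ r) (hr1 : r < 1) (N : ℕ) :
    ∑ j ∈ Finset.range N, r ^ j ≤ (1 - r)⁻¹ := by
  have h := (summable_geometric_of_lt_one hr0 hr1).sum_le_tsum (Finset.range N)
    (fun i _ => pow_nonneg hr0 i)
  rwa [tsum_geometric_of_lt_one hr0 hr1] at h

set_option maxHeartbeats 1600000 in
/-- For `α ∈ (1/2, 1)` and `c > 0`, the sum
`S_n = Σ_{k=1}^{n-1} k^{-2α} exp(-c(n^{1-α} - k^{1-α}))` is `O(ln(n) n^{-α})`. -/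
theorem stmt_18
    (α c : ℝ) (hα : α ∈ Set.Ioo (1/2 : ℝ) 1) (hc : 0 < c) :
    ∃ C > 0, ∀ n : ℕ, 2 ≤ n →
      ∑ k ∈ Finset.Icc 1 (n - 1),
          (k : ℝ) ^ (-(2 * α)) * Real.exp (-c * ((n : ℝ) ^ (1 - α) - (k : ℝ) ^ (1 - α)))
        ≤ C * Real.log n * (n : ℝ) ^ (-α) := by
  obtain ⟨hα1, hα2⟩ := hα
  have hα0 : 0 < α := by linarith
  set p : ℝ := 1 - α with hp_def
  have hp : 0 < p := by rw [hp_def]; linarith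
  have hp1 : p < 1 := by rw [hp_def]; linarith
  -- constants
  set γ : ℝ := 1 - (2:ℝ) ^ (α - 1) with hγ_def
  have hγ : 0 < γ := by
    have h := rpow_lt_one_of_one_lt_of_neg (x := (2:ℝ)) (z := α - 1) one_lt_two (by linarith)
    rw [hγ_def]; linarith
  set δ : ℝ := c * γ with hδ_def
  have hδ : 0 < δ := mul_pos hc hγ
  set m₀ : ℕ := ⌈2 / p⌉₊ with hm₀_def
  have hm₀p : 2 ≤ (m₀ : ℝ) * p := by
    have h1 : 2 / p ≤ (m₀ : ℝ) := Nat.le_ceil _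
    calc (2:ℝ) = 2 / p * p := by field_simp
    _ ≤ (m₀ : ℝ) * p := by nlinarith
  set K1 : ℝ := (Nat.factorial m₀ : ℝ) / δ ^ m₀ with hK1_def
  have hK1 : 0 < K1 := div_pos (by positivity) (pow_pos hδ _)
  set K2 : ℝ := 4 * (1 / (c * p) + 1) with hK2_def
  have hK2 : 0 < K2 := by positivity
  have hlog2 : 0 < Real.log 2 := Real.log_pos one_lt_two
  refine ⟨(K1 + K2) / Real.log 2, by positivity, fun n hn => ?_⟩
  have hn0 : (0:ℝ) < n := by positivity
  have hn1 : (1:ℝ) ≤ n := by exact_mod_cast Nat.one_le_of_lt hn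
  have hnα : (0:ℝ) < (n:ℝ) ^ (-α) := rpow_pos_of_pos hn0 _
  have hnp0 : (0:ℝ) < (n:ℝ) ^ p := rpow_pos_of_pos hn0 _
  have hnpA : (n:ℝ) ^ p = (n:ℝ) * (n:ℝ) ^ (-α) := by
    have h : p = 1 + (-α) := by rw [hp_def]; ring
    rw [h, Real.rpow_add hn0, Real.rpow_one]
  set m : ℕ := n / 2 with hm_def
  have hm_le : m ≤ n - 1 := by omega
  have hm_real : (m : ℝ) ≤ (n:ℝ) / 2 := by
    have h : 2 * m ≤ n := by omega
    have h' : (2:ℝ) * m ≤ n := by exact_mod_cast h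
    linarith
  -- split the sum
  have hIcc : Finset.Icc 1 (n-1) = Finset.Ioc 0 (n-1) := by
    ext x; simp [Nat.lt_iff_add_one_le]
  have hsplit := Finset.sum_Ioc_consecutive (fun k : ℕ =>
      (k : ℝ) ^ (-(2 * α)) * Real.exp (-c * ((n : ℝ) ^ p - (k : ℝ) ^ p)))
    (Nat.zero_le m) hm_le
  rw [hIcc, ← hsplit]
  -- chunk 1 : k ≤ n/2
  have hchunk1 : ∑ k ∈ Finset.Ioc 0 m,
      (k : ℝ) ^ (-(2 * α)) * Real.exp (-c * ((n : ℝ) ^ p - (k : ℝ) ^ p))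
      ≤ K1 * (n:ℝ) ^ (-α) := by
    have hbound : ∀ k ∈ Finset.Ioc 0 m,
        (k : ℝ) ^ (-(2 * α)) * Real.exp (-c * ((n : ℝ) ^ p - (k : ℝ) ^ p))
        ≤ Real.exp (-(δ * (n:ℝ) ^ p)) := by
      intro k hk
      simp only [Finset.mem_Ioc] at hk
      have hk1 : (1:ℝ) ≤ k := by exact_mod_cast hk.1
      have hkle : (k:ℝ) ≤ (n:ℝ)/2 := le_trans (by exact_mod_cast hk.2) hm_real
      have h1 : (k : ℝ) ^ (-(2 * α)) ≤ 1 :=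
        rpow_le_one_of_one_le_of_nonpos hk1 (by linarith)
      have h2 : Real.exp (-c * ((n : ℝ) ^ p - (k : ℝ) ^ p))
          ≤ Real.exp (-(δ * (n:ℝ) ^ p)) := by
        apply Real.exp_le_exp.mpr
        have hkp : (k:ℝ) ^ p ≤ ((n:ℝ)/2) ^ p :=
          rpow_le_rpow (by linarith) hkle hp.le
        have hap : α - 1 = -p := by rw [hp_def]; ring
        have hdiv : ((n:ℝ)/2) ^ p = (n:ℝ) ^ p * (2:ℝ) ^ (α - 1) := by
          rw [Real.div_rpow (le_of_lt hn0) (by norm_num), hap,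
            Real.rpow_neg (by norm_num)]
          ring
        have hkp' : (k:ℝ) ^ p ≤ (n:ℝ) ^ p * (2:ℝ) ^ (α - 1) := hdiv ▸ hkp
        have h2a : (2:ℝ) ^ (α - 1) = 1 - γ := by rw [hγ_def]; ring
        rw [h2a] at hkp'
        nlinarith [hnp0]
      calc (k : ℝ) ^ (-(2 * α)) * Real.exp (-c * ((n : ℝ) ^ p - (k : ℝ) ^ p))
          ≤ 1 * Real.exp (-(δ * (n:ℝ) ^ p)) :=
            mul_le_mul h1 h2 (Real.exp_pos _).le zero_le_one
        _ = Real.exp (-(δ * (n:ℝ) ^ p)) := one_mul _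
    calc ∑ k ∈ Finset.Ioc 0 m,
        (k : ℝ) ^ (-(2 * α)) * Real.exp (-c * ((n : ℝ) ^ p - (k : ℝ) ^ p))
        ≤ ∑ _k ∈ Finset.Ioc 0 m, Real.exp (-(δ * (n:ℝ) ^ p)) :=
          Finset.sum_le_sum hbound
      _ = (m : ℝ) * Real.exp (-(δ * (n:ℝ) ^ p)) := by
          rw [Finset.sum_const, Nat.card_Ioc]; simp
      _ ≤ (n : ℝ) * Real.exp (-(δ * (n:ℝ) ^ p)) := by
          have h : (m:ℝ) ≤ n := by exact_mod_cast Nat.div_le_self n 2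
          exact mul_le_mul_of_nonneg_right h (Real.exp_pos _).le
      _ ≤ K1 * (n:ℝ) ^ (-α) := by
          rw [Real.exp_neg, mul_inv_le_iff₀ (Real.exp_pos _)]
          have hkey : (n:ℝ) ^ ((1:ℝ) + α) ≤ K1 * Real.exp (δ * (n:ℝ) ^ p) := by
            have h1 : (δ * (n:ℝ)^p) ^ m₀ / (Nat.factorial m₀ : ℝ) ≤ Real.exp (δ * (n:ℝ)^p) :=
              Real.pow_div_factorial_le_exp _ (by positivity) m₀
            have h2 : ((n:ℝ)^p) ^ m₀ = (n:ℝ) ^ (p * m₀) := by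
              rw [← Real.rpow_natCast ((n:ℝ)^p) m₀, ← Real.rpow_mul (le_of_lt hn0)]
            have h3 : (n:ℝ) ^ ((1:ℝ) + α) ≤ (n:ℝ) ^ (p * m₀) :=
              Real.rpow_le_rpow_of_exponent_le hn1 (by nlinarith)
            have h4 : (δ * (n:ℝ)^p) ^ m₀ = δ ^ m₀ * (n:ℝ) ^ (p * m₀) := by
              rw [mul_pow, h2]
            have hδm : 0 < δ ^ m₀ := pow_pos hδ _
            have hfac : (0:ℝ) < (Nat.factorial m₀ : ℝ) := by exact_mod_cast Nat.factorial_pos m₀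
            calc (n:ℝ) ^ ((1:ℝ) + α) ≤ (n:ℝ) ^ (p * m₀) := h3
              _ = K1 * (δ ^ m₀ * (n:ℝ) ^ (p * m₀) / (Nat.factorial m₀ : ℝ)) := by
                  rw [hK1_def]; field_simp
              _ = K1 * ((δ * (n:ℝ)^p) ^ m₀ / (Nat.factorial m₀ : ℝ)) := by rw [h4]
              _ ≤ K1 * Real.exp (δ * (n:ℝ)^p) :=
                  mul_le_mul_of_nonneg_left h1 hK1.le
          calc (n:ℝ) = (n:ℝ) ^ (-α) * (n:ℝ) ^ ((1:ℝ) + α) := by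
                rw [← Real.rpow_add hn0]; norm_num
            _ ≤ (n:ℝ) ^ (-α) * (K1 * Real.exp (δ * (n:ℝ) ^ p)) :=
                mul_le_mul_of_nonneg_left hkey hnα.le
            _ = K1 * (n:ℝ) ^ (-α) * Real.exp (δ * (n:ℝ) ^ p) := by ring
  -- chunk 2 : n/2 < k ≤ n-1
  have hchunk2 : ∑ k ∈ Finset.Ioc m (n-1),
      (k : ℝ) ^ (-(2 * α)) * Real.exp (-c * ((n : ℝ) ^ p - (k : ℝ) ^ p))
      ≤ K2 * (n:ℝ) ^ (-α) := by
    set A : ℝ := (n:ℝ) ^ (-α) with hA_def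
    set β : ℝ := c * p * A with hβ_def
    have hβ0 : 0 < β := by positivity
    set r : ℝ := Real.exp (-β) with hr_def
    have hr0 : 0 ≤ r := (Real.exp_pos _).le
    have hr1 : r < 1 := Real.exp_lt_one_iff.mpr (by linarith)
    have hbound : ∀ k ∈ Finset.Ioc m (n-1),
        (k : ℝ) ^ (-(2 * α)) * Real.exp (-c * ((n : ℝ) ^ p - (k : ℝ) ^ p))
        ≤ 4 * (n:ℝ) ^ (-(2*α)) * r ^ (n - k) := by
      intro k hk
      simp only [Finset.mem_Ioc] at hk
      have hkm : m < k := hk.1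
      have hk1 : 1 ≤ k := by omega
      have hk1' : (1:ℝ) ≤ k := by exact_mod_cast hk1
      have hknN : k ≤ n := by omega
      have hkn' : (k:ℝ) ≤ n := by exact_mod_cast hknN
      have hkhalf : (n:ℝ)/2 ≤ k := by
        have h : n < (m + 1) * 2 := by omega
        have h' : (n:ℝ) < ((m:ℝ) + 1) * 2 := by exact_mod_cast h
        have hmk : (m:ℝ) + 1 ≤ k := by exact_mod_cast hkm
        linarith
      -- base bound
      have h1 : (k : ℝ) ^ (-(2 * α)) ≤ 4 * (n:ℝ) ^ (-(2*α)) := by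
        have ha : (k:ℝ) ^ (-(2*α)) ≤ ((n:ℝ)/2) ^ (-(2*α)) :=
          rpow_le_rpow_of_nonpos (by linarith) hkhalf (by linarith)
        have hb : ((n:ℝ)/2) ^ (-(2*α)) = (n:ℝ) ^ (-(2*α)) * (2:ℝ) ^ (2*α) := by
          rw [Real.div_rpow (le_of_lt hn0) (by norm_num),
            Real.rpow_neg (by norm_num : (0:ℝ) ≤ 2) (2*α)]
          rw [div_eq_mul_inv, inv_inv]
        have hc4 : (2:ℝ) ^ (2*α) ≤ 4 := by
          calc (2:ℝ) ^ (2*α) ≤ (2:ℝ) ^ (2:ℝ) :=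
              Real.rpow_le_rpow_of_exponent_le one_le_two (by linarith)
            _ = 4 := by
              rw [show (2:ℝ) = ((2:ℕ):ℝ) from by norm_num, Real.rpow_natCast]
              norm_num
        have hn2α : (0:ℝ) ≤ (n:ℝ) ^ (-(2*α)) := (rpow_pos_of_pos hn0 _).le
        nlinarith
      -- exponential bound via Bernoulli
      have h2 : Real.exp (-c * ((n : ℝ) ^ p - (k : ℝ) ^ p)) ≤ r ^ (n - k) := by
        have hnk : ((n - k : ℕ):ℝ) = (n:ℝ) - k := by
          rw [Nat.cast_sub hknN]
        have hs : -1 ≤ (k:ℝ)/n - 1 := by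
          have : (0:ℝ) ≤ (k:ℝ)/n := by positivity
          linarith
        have hber := rpow_one_add_le_one_add_mul_self hs hp.le hp1.le
        have hone : (1:ℝ) + ((k:ℝ)/n - 1) = (k:ℝ)/n := by ring
        rw [hone] at hber
        have hk0 : (0:ℝ) ≤ (k:ℝ) := by positivity
        have hdivr : ((k:ℝ)/n) ^ p = (k:ℝ)^p / (n:ℝ)^p :=
          Real.div_rpow hk0 (le_of_lt hn0) p
        rw [hdivr] at hber
        have hkp : (k:ℝ)^p ≤ (1 + p * ((k:ℝ)/n - 1)) * (n:ℝ)^p :=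
          (div_le_iff₀ hnp0).mp hber
        have hexpand : (1 + p * ((k:ℝ)/n - 1)) * (n:ℝ)^p
            = (n:ℝ)^p + p * ((k:ℝ) - n) * A := by
          rw [hnpA]; field_simp
        rw [hexpand] at hkp
        have hmain : -c * ((n : ℝ) ^ p - (k : ℝ) ^ p)
            ≤ ((n - k : ℕ):ℝ) * (-β) := by
          rw [hnk, hβ_def]
          nlinarith [mul_le_mul_of_nonneg_left
            (by linarith : p * ((n:ℝ) - k) * A ≤ (n:ℝ)^p - (k:ℝ)^p) hc.le]
        calc Real.exp (-c * ((n : ℝ) ^ p - (k : ℝ) ^ p))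
            ≤ Real.exp (((n - k : ℕ):ℝ) * (-β)) := Real.exp_le_exp.mpr hmain
          _ = r ^ (n - k) := by rw [Real.exp_nat_mul, hr_def]
      calc (k : ℝ) ^ (-(2 * α)) * Real.exp (-c * ((n : ℝ) ^ p - (k : ℝ) ^ p))
          ≤ (4 * (n:ℝ) ^ (-(2*α))) * r ^ (n - k) :=
            mul_le_mul h1 h2 (Real.exp_pos _).le (by positivity)
        _ = 4 * (n:ℝ) ^ (-(2*α)) * r ^ (n - k) := by ring
    have hgeo : ∑ k ∈ Finset.Ioc m (n-1), r ^ (n - k) ≤ (1 - r)⁻¹ := by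
      have himg : ∑ j ∈ (Finset.Ioc m (n-1)).image (fun k => n - k), r ^ j
          = ∑ k ∈ Finset.Ioc m (n-1), r ^ (n - k) := by
        apply Finset.sum_image
        intro x hx y hy hxy
        simp only [Finset.coe_Ioc, Set.mem_Ioc] at hx hy hxy
        omega
      rw [← himg]
      have hsub : (Finset.Ioc m (n-1)).image (fun k => n - k) ⊆ Finset.range n := by
        intro j hj
        simp only [Finset.mem_image, Finset.mem_Ioc, Finset.mem_range] at hj ⊢
        obtain ⟨k, hk, rfl⟩ := hj
        omega
      calc ∑ j ∈ (Finset.Ioc m (n-1)).image (fun k => n - k), r ^ j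
          ≤ ∑ j ∈ Finset.range n, r ^ j :=
            Finset.sum_le_sum_of_subset_of_nonneg hsub
              (fun i _ _ => pow_nonneg hr0 i)
        _ ≤ (1 - r)⁻¹ := geom_partial_le hr0 hr1 n
    have hinv : (1 - r)⁻¹ ≤ (1 / (c * p) + 1) * (n:ℝ)^α := by
      have hexp : β + 1 ≤ Real.exp β := Real.add_one_le_exp β
      have hrle : r ≤ (β + 1)⁻¹ := by
        rw [hr_def, Real.exp_neg]
        exact inv_anti₀ (by linarith) hexp
      have h1r : β / (1 + β) ≤ 1 - r := by
        have h : (β+1)⁻¹ = 1 - β/(1+β) := by field_simp; ring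
        rw [h] at hrle; linarith
      have h1r0 : 0 < β / (1 + β) := by positivity
      have hfin : (1 - r)⁻¹ ≤ (1 + β)/β := by
        calc (1 - r)⁻¹ ≤ (β / (1 + β))⁻¹ :=
            inv_anti₀ h1r0 h1r
          _ = (1 + β)/β := by rw [inv_div]
      have hAinv : A⁻¹ = (n:ℝ)^α := by
        rw [hA_def, ← Real.rpow_neg (le_of_lt hn0), neg_neg]
      have hA0 : 0 < A := hnα
      have hnα1 : (1:ℝ) ≤ (n:ℝ)^α := by
        calc (1:ℝ) = (n:ℝ)^(0:ℝ) := (Real.rpow_zero _).symm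
          _ ≤ (n:ℝ)^α := Real.rpow_le_rpow_of_exponent_le hn1 hα0.le
      have hβinv : (1 + β)/β = 1/β + 1 := by field_simp
      have h1β : 1/β = (1/(c*p)) * (n:ℝ)^α := by
        rw [hβ_def, ← hAinv]; field_simp
      calc (1 - r)⁻¹ ≤ (1 + β)/β := hfin
        _ = 1/β + 1 := hβinv
        _ = (1/(c*p)) * (n:ℝ)^α + 1 := by rw [h1β]
        _ ≤ (1/(c*p)) * (n:ℝ)^α + 1 * (n:ℝ)^α := by nlinarith
        _ = (1 / (c * p) + 1) * (n:ℝ)^α := by ring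
    have hcollapse : (n:ℝ) ^ (-(2*α)) * (n:ℝ)^α = (n:ℝ)^(-α) := by
      rw [← Real.rpow_add hn0]; ring_nf
    calc ∑ k ∈ Finset.Ioc m (n-1),
        (k : ℝ) ^ (-(2 * α)) * Real.exp (-c * ((n : ℝ) ^ p - (k : ℝ) ^ p))
        ≤ ∑ k ∈ Finset.Ioc m (n-1), 4 * (n:ℝ) ^ (-(2*α)) * r ^ (n - k) :=
          Finset.sum_le_sum hbound
      _ = 4 * (n:ℝ) ^ (-(2*α)) * ∑ k ∈ Finset.Ioc m (n-1), r ^ (n - k) := by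
          rw [Finset.mul_sum]
      _ ≤ 4 * (n:ℝ) ^ (-(2*α)) * (1 - r)⁻¹ := by
          apply mul_le_mul_of_nonneg_left hgeo (by positivity)
      _ ≤ 4 * (n:ℝ) ^ (-(2*α)) * ((1 / (c * p) + 1) * (n:ℝ)^α) := by
          apply mul_le_mul_of_nonneg_left hinv (by positivity)
      _ = K2 * ((n:ℝ) ^ (-(2*α)) * (n:ℝ)^α) := by rw [hK2_def]; ring
      _ = K2 * (n:ℝ) ^ (-α) := by rw [hcollapse]
  -- combine
  have hlogn : Real.log 2 ≤ Real.log n := by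
    apply Real.log_le_log two_pos
    exact_mod_cast hn
  have hfinal : K1 + K2 ≤ (K1 + K2) / Real.log 2 * Real.log n := by
    rw [div_mul_eq_mul_div, le_div_iff₀ hlog2]
    nlinarith
  calc ∑ k ∈ Finset.Ioc 0 m,
        (k : ℝ) ^ (-(2 * α)) * Real.exp (-c * ((n : ℝ) ^ p - (k : ℝ) ^ p))
      + ∑ k ∈ Finset.Ioc m (n-1),
        (k : ℝ) ^ (-(2 * α)) * Real.exp (-c * ((n : ℝ) ^ p - (k : ℝ) ^ p))
      ≤ K1 * (n:ℝ) ^ (-α) + K2 * (n:ℝ) ^ (-α) := add_le_add hchunk1 hchunk2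
    _ = (K1 + K2) * (n:ℝ) ^ (-α) := by ring
    _ ≤ (K1 + K2) / Real.log 2 * Real.log n * (n:ℝ) ^ (-α) :=
        mul_le_mul_of_nonneg_right hfinal hnα.le
end

section
/- Let (u_n) be a sequence of nonnegative reals, C > 0, α ∈ (0,1), and l(n) defined by l(n)^{1−α} = n^{1−α} − c_α ln n (for n large so l(n) ≥ 1), such that for all n ≥ N: u_n ≤ C ln(n)/n^α + (1/2) max_{l(n) < k ≤ n} u_k. Then there exist N' ≥ N and C'' (e.g. C'' = 4C) such that u_n ≤ C'' ln(n)/n^α for all n ≥ N'. -/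
open Real

set_option maxHeartbeats 1000000 in
/-- Deterministic induction lemma: if for all `n ≥ N`,
`u_n ≤ C ln(n)/n^α + (1/2) sup_{l(n) < k ≤ n} u_k` with
`l(n) = (n^{1-α} - c_α ln n)^{1/(1-α)}`, then `u_n = O(ln(n)/n^α)`. -/
theorem stmt_19
    (α cα C : ℝ) (hα : α ∈ Set.Ioo (0 : ℝ) 1) (hcα : 0 < cα) (hC : 0 < C)
    (u : ℕ → ℝ) (hu : ∀ n, 0 ≤ u n)
    (l : ℕ → ℝ)
    (hl : ∀ n : ℕ, l n = ((n : ℝ) ^ (1 - α) - cα * Real.log n) ^ (1 / (1 - α)))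
    (N : ℕ) (hN : ∀ n ≥ N, 1 ≤ l n)
    (hrec : ∀ n ≥ N,
      u n ≤ C * Real.log n / (n : ℝ) ^ α +
        (1 / 2) * sSup {x : ℝ | ∃ k : ℕ, l n < (k : ℝ) ∧ k ≤ n ∧ x = u k}) :
    ∃ N' ≥ N, ∃ C'' : ℝ, 0 < C'' ∧ ∀ n ≥ N',
      u n ≤ C'' * Real.log n / (n : ℝ) ^ α := by
  obtain ⟨hα0, hα1⟩ := hα
  have h1α : (0:ℝ) < 1 - α := by linarith
  set ε : ℝ := 1 - (2/3 : ℝ) ^ (1 - α) with hεdef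
  have hεpos : 0 < ε := by
    have h23 : (2/3 : ℝ) ^ (1 - α) < 1 :=
      Real.rpow_lt_one (by norm_num) (by norm_num) h1α
    simp only [hεdef]; linarith
  -- eventually cα * log x ≤ ε * x ^ (1-α) for real x
  have hlo : ∀ᶠ x : ℝ in Filter.atTop, cα * Real.log x ≤ ε * x ^ (1 - α) := by
    have h := (isLittleO_log_rpow_atTop h1α).bound (div_pos hεpos hcα)
    filter_upwards [h, Filter.eventually_ge_atTop (1:ℝ)] with x hx hx1
    have hlog : 0 ≤ Real.log x := Real.log_nonneg hx1
    have hrp : 0 ≤ x ^ (1 - α) := Real.rpow_nonneg (by linarith) _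
    rw [Real.norm_eq_abs, Real.norm_eq_abs, abs_of_nonneg hlog, abs_of_nonneg hrp] at hx
    have := mul_le_mul_of_nonneg_left hx (le_of_lt hcα)
    calc cα * Real.log x ≤ cα * (ε / cα * x ^ (1 - α)) := this
      _ = ε * x ^ (1 - α) := by field_simp
  obtain ⟨N₀, hN₀⟩ := Filter.eventually_atTop.mp
    (tendsto_natCast_atTop_atTop.eventually hlo)
  set N₁ : ℕ := max (max N N₀) 3 with hN₁def
  set N₂ : ℕ := 2 * N₁ with hN₂def
  have hN₁3 : 3 ≤ N₁ := le_max_right _ _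
  have hN₁N : N ≤ N₁ := le_trans (le_max_left _ _) (le_max_left _ _)
  -- basic facts for n ≥ N₁
  have basic : ∀ n : ℕ, N₁ ≤ n → (3:ℝ) ≤ n ∧ 1 ≤ Real.log n ∧ (0:ℝ) < (n:ℝ) ^ α := by
    intro n hn
    have h3 : (3:ℝ) ≤ n := by exact_mod_cast le_trans hN₁3 hn
    have hnpos : (0:ℝ) < n := by linarith
    refine ⟨h3, ?_, Real.rpow_pos_of_pos hnpos _⟩
    rw [Real.le_log_iff_exp_le hnpos]
    have := Real.exp_one_lt_d9
    linarith
  -- the l bounds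
  have hlbnd : ∀ n : ℕ, N₁ ≤ n → (2/3 : ℝ) * n ≤ l n ∧ l n < n := by
    intro n hn
    obtain ⟨h3, hlog1, hnα⟩ := basic n hn
    have hnpos : (0:ℝ) < n := by linarith
    have hev : cα * Real.log n ≤ ε * (n:ℝ) ^ (1 - α) :=
      hN₀ n (le_trans (le_trans (le_max_right _ _) (le_max_left _ _)) hn)
    have hbase : ((2/3 : ℝ) * n) ^ (1 - α) ≤ (n:ℝ) ^ (1 - α) - cα * Real.log n := by
      have : ((2/3 : ℝ) * n) ^ (1 - α) = (2/3:ℝ)^(1-α) * (n:ℝ)^(1-α) :=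
        Real.mul_rpow (by norm_num) (le_of_lt hnpos)
      rw [this]
      have : (2/3:ℝ)^(1-α) * (n:ℝ)^(1-α) = (1 - ε) * (n:ℝ)^(1-α) := by
        simp only [hεdef]; ring
      rw [this]; nlinarith
    have hbase0 : (0:ℝ) ≤ ((2/3 : ℝ) * n) ^ (1 - α) :=
      Real.rpow_nonneg (by linarith) _
    have hexp : (1 - α) * (1 / (1 - α)) = 1 := mul_one_div_cancel (ne_of_gt h1α)
    constructor
    · have h1 : (((2/3 : ℝ) * n) ^ (1 - α)) ^ (1 / (1 - α)) ≤ l n := by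
        rw [hl n]
        exact Real.rpow_le_rpow hbase0 hbase (by positivity)
      rwa [← Real.rpow_mul (by linarith : (0:ℝ) ≤ (2/3:ℝ)*n), hexp, Real.rpow_one] at h1
    · have hlt : (n:ℝ) ^ (1 - α) - cα * Real.log n < (n:ℝ) ^ (1 - α) := by
        nlinarith
      have h2 : l n < ((n:ℝ) ^ (1 - α)) ^ (1 / (1 - α)) := by
        rw [hl n]
        exact Real.rpow_lt_rpow (le_trans hbase0 hbase) hlt (by positivity)
      rwa [← Real.rpow_mul (le_of_lt hnpos), hexp, Real.rpow_one] at h2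
  have hneIcc : (Finset.Icc N₁ N₂).Nonempty :=
    ⟨N₁, Finset.mem_Icc.mpr ⟨le_refl _, by omega⟩⟩
  set B : ℝ := (Finset.Icc N₁ N₂).sup' hneIcc (fun k => u k * (k:ℝ) ^ α) with hBdef
  set C'' : ℝ := max (4 * C) (max B 1) with hCdef
  have hC''1 : (1:ℝ) ≤ C'' := le_trans (le_max_right _ _) (le_max_right _ _)
  have hC''B : B ≤ C'' := le_trans (le_max_left _ _) (le_max_right _ _)
  have hC''4C : 4 * C ≤ C'' := le_max_left _ _
  have hC''pos : 0 < C'' := lt_of_lt_of_le one_pos hC''1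
  have key : ∀ n : ℕ, N₁ ≤ n → u n ≤ C'' * Real.log n / (n:ℝ) ^ α := by
    intro n
    induction n using Nat.strong_induction_on with
    | _ n ih =>
      intro hn
      obtain ⟨h3, hlog1, hnα⟩ := basic n hn
      by_cases hn2 : n ≤ N₂
      · -- small case
        have hmem : n ∈ Finset.Icc N₁ N₂ := Finset.mem_Icc.mpr ⟨hn, hn2⟩
        have hB : u n * (n:ℝ) ^ α ≤ B := by rw [hBdef]; exact Finset.le_sup' (fun k => u k * (k:ℝ) ^ α) hmem
        have h1 : u n ≤ B / (n:ℝ) ^ α := (le_div_iff₀ hnα).mpr hB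
        calc u n ≤ B / (n:ℝ)^α := h1
          _ ≤ C'' * Real.log n / (n:ℝ)^α := by
              apply div_le_div₀ ?_ ?_ hnα le_rfl
              · positivity
              calc B ≤ C'' := hC''B
                _ = C'' * 1 := (mul_one _).symm
                _ ≤ C'' * Real.log n := by
                    exact mul_le_mul_of_nonneg_left hlog1 (le_of_lt hC''pos)
      · -- large case
        push_neg at hn2
        obtain ⟨hlb, hln⟩ := hlbnd n hn
        have hnN : N ≤ n := le_trans hN₁N hn
        set S : Set ℝ := {x : ℝ | ∃ k : ℕ, l n < (k : ℝ) ∧ k ≤ n ∧ x = u k} with hSdef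
        set b : ℝ := max (u n) ((3/2) * (C'' * Real.log n / (n:ℝ)^α)) with hbdef
        have hb : ∀ x ∈ S, x ≤ b := by
          rintro x ⟨k, hk1, hk2, rfl⟩
          rcases eq_or_lt_of_le hk2 with hkn | hkn
          · subst hkn; exact le_max_left _ _
          · -- k < n
            have hkR : (2/3:ℝ) * n < (k:ℝ) := lt_of_le_of_lt hlb hk1
            have hkN₁ : N₁ ≤ k := by
              have hN₁R : (N₁:ℝ) ≤ (2/3:ℝ) * n := by
                have : (N₂:ℝ) ≤ n := by exact_mod_cast le_of_lt hn2
                have hN₂R : (N₂:ℝ) = 2 * N₁ := by exact_mod_cast rfl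
                nlinarith [Nat.cast_nonneg (α := ℝ) N₁]
              exact_mod_cast le_of_lt (lt_of_le_of_lt hN₁R hkR)
            have hIH := ih k hkn hkN₁
            obtain ⟨hk3, hklog1, hkα⟩ := basic k hkN₁
            have hkpos : (0:ℝ) < k := by linarith
            have hlogkn : Real.log k ≤ Real.log n := by
              apply Real.log_le_log hkpos
              exact_mod_cast le_of_lt hkn
            have hkαge : (2/3:ℝ) * (n:ℝ)^α ≤ (k:ℝ)^α := by
              have h1 : ((2/3:ℝ) * n) ^ α ≤ (k:ℝ)^α :=
                Real.rpow_le_rpow (by positivity) (le_of_lt hkR) (le_of_lt hα0)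
              have h2 : ((2/3:ℝ) * n) ^ α = (2/3:ℝ)^α * (n:ℝ)^α :=
                Real.mul_rpow (by norm_num) (by positivity)
              have h3' : (2/3:ℝ) ≤ (2/3:ℝ)^α := by
                have := Real.rpow_le_rpow_of_exponent_ge (by norm_num : (0:ℝ) < 2/3)
                  (by norm_num : (2/3:ℝ) ≤ 1) (le_of_lt hα1)
                simpa using this
              nlinarith [Real.rpow_pos_of_pos (show (0:ℝ) < n by linarith) α]
            have : C'' * Real.log k / (k:ℝ)^α ≤ C'' * Real.log n / ((2/3:ℝ) * (n:ℝ)^α) := by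
              apply div_le_div₀ (by positivity)
                (mul_le_mul_of_nonneg_left hlogkn (le_of_lt hC''pos))
                (by positivity) hkαge
            have heq : C'' * Real.log n / ((2/3:ℝ) * (n:ℝ)^α)
                = (3/2) * (C'' * Real.log n / (n:ℝ)^α) := by
              field_simp
            calc u k ≤ C'' * Real.log k / (k:ℝ)^α := hIH
              _ ≤ C'' * Real.log n / ((2/3:ℝ) * (n:ℝ)^α) := this
              _ = (3/2) * (C'' * Real.log n / (n:ℝ)^α) := heq
              _ ≤ b := le_max_right _ _
        have hb0 : 0 ≤ b := le_trans (hu n) (le_max_left _ _)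
        have hsSup : sSup S ≤ b := Real.sSup_le hb hb0
        have hr := hrec n hnN
        have hr' : u n ≤ C * Real.log n / (n:ℝ)^α + (1/2) * b := by
          have := mul_le_mul_of_nonneg_left hsSup (by norm_num : (0:ℝ) ≤ 1/2)
          calc u n ≤ C * Real.log n / (n:ℝ)^α + (1/2) * sSup S := hr
            _ ≤ C * Real.log n / (n:ℝ)^α + (1/2) * b := by linarith
        have hX : 0 < Real.log n / (n:ℝ)^α := by positivity
        have hCr : C * Real.log n / (n:ℝ)^α = C * (Real.log n / (n:ℝ)^α) :=
          mul_div_assoc _ _ _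
        have hC''r : C'' * Real.log n / (n:ℝ)^α = C'' * (Real.log n / (n:ℝ)^α) :=
          mul_div_assoc _ _ _
        rw [hC''r]
        rcases le_total (u n) ((3/2) * (C'' * Real.log n / (n:ℝ)^α)) with hmc | hmc
        · have hbeq : b = (3/2) * (C'' * Real.log n / (n:ℝ)^α) := max_eq_right hmc
          rw [hbeq, hC''r, hCr] at hr'
          nlinarith [hX, hr', hC''4C]
        · have hbeq : b = u n := max_eq_left hmc
          rw [hbeq, hCr] at hr'
          nlinarith [hX, hr', hC''4C, hC]
  exact ⟨N₁, hN₁N, C'', hC''pos, key⟩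
end
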